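/- Let d ≥ 1 be an integer, 1 < p < ∞, and let q = p/(p−1) be the dual exponent. Let a, b ∈ ℝ satisfy a + b > 0. Suppose there is a constant M > 0 such that for every measurable φ : ℝ^d → [0, ∞) with φ ∈ L^p(ℝ^d), the function (Kφ)(x) := ∫_{ℝ^d} φ(y) / (|x|^a |x−y|^{d−(a+b)} |y|^b) dy satisfies ‖Kφ‖_{L^p} ≤ M ‖φ‖_{L^p}. Then necessarily a < d/p and b < d/q. -/

import Mathlib

set_option maxHeartbeats 2000000

open MeasureTheory

noncomputable section

open Metric Set
open scoped ENNReal NNReal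

namespace NW

variable {d : ℕ}

def Ann (d : ℕ) (ε R : ℝ) : Set (EuclideanSpace ℝ (Fin d)) := {y | ε ≤ ‖y‖ ∧ ‖y‖ ≤ R}

lemma measurableSet_Ann {ε R : ℝ} : MeasurableSet (Ann d ε R) :=
  ((isClosed_le continuous_const continuous_norm).inter
    (isClosed_le continuous_norm continuous_const)).measurableSet

lemma volume_Ann_ne_top {ε R : ℝ} : volume (Ann d ε R) ≠ ⊤ := by
  refine (lt_of_le_of_lt (measure_mono ?_) (measure_closedBall_lt_top (μ := (volume : Measure (EuclideanSpace ℝ (Fin d)))) (x := 0) (r := R))).ne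
  intro y hy; simpa [mem_closedBall_zero_iff] using hy.2

def sig (d : ℕ) : ℝ := d * (volume (ball (0 : EuclideanSpace ℝ (Fin d)) 1)).toReal

lemma sig_pos (hd : 1 ≤ d) : 0 < sig d := by
  have h1 : (0:ℝ≥0∞) < volume (ball (0 : EuclideanSpace ℝ (Fin d)) 1) :=
    measure_ball_pos volume (0 : EuclideanSpace ℝ (Fin d)) one_pos
  have h2 := (measure_ball_lt_top (μ := (volume : Measure (EuclideanSpace ℝ (Fin d)))) (x := 0) (r := 1)).ne
  exact mul_pos (by exact_mod_cast Nat.pos_of_ne_zero (by omega)) (ENNReal.toReal_pos h1.ne' h2)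

lemma rpow_le_max {l u r t : ℝ} (hl : 0 < l) (h1 : l ≤ r) (h2 : r ≤ u) :
    r ^ t ≤ max (l ^ t) (u ^ t) := by
  rcases le_or_gt 0 t with ht | ht
  · exact le_max_of_le_right (Real.rpow_le_rpow (hl.le.trans h1) h2 ht)
  · refine le_max_of_le_left ?_
    have hr : 0 < r := hl.trans_le h1
    have h3 : l ^ (-t) ≤ r ^ (-t) := Real.rpow_le_rpow hl.le h1 (neg_nonneg.2 ht.le)
    have h4 : (0:ℝ) < l ^ (-t) := Real.rpow_pos_of_pos hl _
    calc r ^ t = (r ^ (-t))⁻¹ := by rw [← Real.rpow_neg hr.le, neg_neg]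
    _ ≤ (l ^ (-t))⁻¹ := by exact inv_anti₀ h4 h3
    _ = l ^ t := by rw [← Real.rpow_neg hl.le, neg_neg]

lemma min_le_rpow {l u r t : ℝ} (hl : 0 < l) (h1 : l ≤ r) (h2 : r ≤ u) :
    min (l ^ t) (u ^ t) ≤ r ^ t := by
  rcases le_or_gt 0 t with ht | ht
  · exact min_le_of_left_le (Real.rpow_le_rpow hl.le h1 ht)
  · refine min_le_of_right_le ?_
    have hr : 0 < r := hl.trans_le h1
    have h3 : r ^ (-t) ≤ u ^ (-t) := Real.rpow_le_rpow hr.le h2 (neg_nonneg.2 ht.le)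
    have h4 : (0:ℝ) < r ^ (-t) := Real.rpow_pos_of_pos hr _
    calc u ^ t = (u ^ (-t))⁻¹ := by rw [← Real.rpow_neg (hr.le.trans h2), neg_neg]
    _ ≤ (r ^ (-t))⁻¹ := by exact inv_anti₀ h4 h3
    _ = r ^ t := by rw [← Real.rpow_neg hr.le, neg_neg]


lemma nontrivial_E (hd : 1 ≤ d) : Nontrivial (EuclideanSpace ℝ (Fin d)) := by
  refine nontrivial_of_ne (EuclideanSpace.single (⟨0, hd⟩ : Fin d) (1:ℝ)) 0 (fun h => ?_)
  have := congrArg norm h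
  simp [EuclideanSpace.norm_single] at this

lemma integral_ann (hd : 1 ≤ d) {ε R : ℝ} (hε : 0 < ε) (hεR : ε ≤ R) :
    ∫ y in Ann d ε R, ‖y‖ ^ (-(d:ℝ)) = sig d * Real.log (R / ε) := by
  haveI : Nontrivial (EuclideanSpace ℝ (Fin d)) := nontrivial_E hd
  have hdim : Module.finrank ℝ (EuclideanSpace ℝ (Fin d)) = d := finrank_euclideanSpace_fin
  set f : ℝ → ℝ := (Icc ε R).indicator (fun r => r ^ (-(d:ℝ))) with hf
  have h1 : ∫ y in Ann d ε R, ‖y‖ ^ (-(d:ℝ)) = ∫ y : EuclideanSpace ℝ (Fin d), f ‖y‖ := by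
    rw [← integral_indicator measurableSet_Ann]
    refine integral_congr_ae (Filter.EventuallyEq.of_eq (funext fun y => ?_))
    by_cases h : y ∈ Ann d ε R
    · rw [indicator_of_mem h, hf, indicator_of_mem (Set.mem_Icc.2 ⟨h.1, h.2⟩)]
    · rw [indicator_of_notMem h, hf, indicator_of_notMem (fun hc => h ⟨(Set.mem_Icc.1 hc).1, (Set.mem_Icc.1 hc).2⟩)]
  rw [h1, integral_fun_norm_addHaar volume f, hdim]
  have h2 : ∫ y in Ioi (0:ℝ), y ^ (d - 1) • f y = Real.log (R / ε) := by
    have h3 : ∀ y : ℝ, y ^ (d-1) • f y = (Icc ε R).indicator (fun r => r ^ (d-1) * r ^ (-(d:ℝ))) y := by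
      intro y
      by_cases h : y ∈ Icc ε R
      · rw [hf, indicator_of_mem h, indicator_of_mem h, smul_eq_mul]
      · rw [hf, indicator_of_notMem h, indicator_of_notMem h, smul_eq_mul, mul_zero]
    simp only [h3]
    rw [integral_indicator measurableSet_Icc, Measure.restrict_restrict measurableSet_Icc]
    have h4 : Icc ε R ∩ Ioi (0:ℝ) = Icc ε R := by
      refine inter_eq_left.2 (fun y hy => ?_)
      exact lt_of_lt_of_le hε hy.1
    rw [h4]
    have h5 : ∀ y ∈ Icc ε R, y ^ (d-1) * y ^ (-(d:ℝ)) = y⁻¹ := by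
      intro y hy
      have hy0 : 0 < y := lt_of_lt_of_le hε hy.1
      rw [← Real.rpow_natCast y (d-1), ← Real.rpow_add hy0, Nat.cast_sub hd]
      have : (d:ℝ) - ((1:ℕ):ℝ) + -(d:ℝ) = -1 := by push_cast; ring
      rw [this, Real.rpow_neg_one]
    rw [setIntegral_congr_fun measurableSet_Icc h5, integral_Icc_eq_integral_Ioc,
      ← intervalIntegral.integral_of_le hεR, integral_inv]
    rw [Set.uIcc_of_le hεR]
    intro hc
    exact absurd hc.1 (not_le.2 hε)
  rw [h2, sig]
  rw [nsmul_eq_mul, smul_eq_mul, mul_assoc]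
  rfl


lemma integrableOn_ann_of_bounded {f : EuclideanSpace ℝ (Fin d) → ℝ} {ε R C : ℝ}
    (hf : AEStronglyMeasurable f volume)
    (h : ∀ y ∈ Ann d ε R, |f y| ≤ C) : IntegrableOn f (Ann d ε R) volume := by
  refine Measure.integrableOn_of_bounded (M := C) volume_Ann_ne_top hf ?_
  filter_upwards [ae_restrict_mem measurableSet_Ann] with y hy
  simpa [Real.norm_eq_abs] using h y hy

lemma integrableOn_ann_rpow {ε R : ℝ} (hε : 0 < ε) (s : ℝ) :
    IntegrableOn (fun y : EuclideanSpace ℝ (Fin d) => ‖y‖ ^ s) (Ann d ε R) volume := by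
  refine integrableOn_ann_of_bounded
    ((show Measurable (fun y : EuclideanSpace ℝ (Fin d) => ‖y‖ ^ s) by fun_prop).aestronglyMeasurable)
    (C := max (ε ^ s) (R ^ s)) ?_
  intro y hy
  rw [abs_of_nonneg (Real.rpow_nonneg (norm_nonneg y) s)]
  exact rpow_le_max hε hy.1 hy.2

lemma lintegral_ann_eq (hd : 1 ≤ d) {ε R : ℝ} (hε : 0 < ε) (hεR : ε ≤ R) :
    ∫⁻ y in Ann d ε R, ENNReal.ofReal (‖y‖ ^ (-(d:ℝ)))
      = ENNReal.ofReal (sig d * Real.log (R / ε)) := by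
  rw [← ofReal_integral_eq_lintegral_ofReal (integrableOn_ann_rpow hε _)
    (Filter.Eventually.of_forall fun y => Real.rpow_nonneg (norm_nonneg y) _),
    integral_ann hd hε hεR]

lemma lintegral_ann_ge (hd : 1 ≤ d) {ε R s : ℝ} (hε : 0 < ε) (hεR : ε ≤ R) (hR : R ≤ 1)
    (hs : s ≤ -(d:ℝ)) :
    ENNReal.ofReal (sig d * Real.log (R / ε)) ≤ ∫⁻ y in Ann d ε R, ENNReal.ofReal (‖y‖ ^ s) := by
  rw [← lintegral_ann_eq hd hε hεR]
  refine setLIntegral_mono (Measurable.ennreal_ofReal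
    (show Measurable (fun y : EuclideanSpace ℝ (Fin d) => ‖y‖ ^ s) by fun_prop)) ?_
  intro y hy
  refine ENNReal.ofReal_le_ofReal ?_
  have hy0 : 0 < ‖y‖ := lt_of_lt_of_le hε hy.1
  exact Real.rpow_le_rpow_of_exponent_ge hy0 (hy.2.trans hR) hs

lemma lintegral_rpow_indicator {p : ℝ} (hp : 0 < p) {ε R c s : ℝ} (hc : 0 ≤ c) :
    ∫⁻ x, ‖(Ann d ε R).indicator (fun x => c * ‖x‖ ^ s) x‖ₑ ^ p
      = ENNReal.ofReal (c ^ p) * ∫⁻ x in Ann d ε R, ENNReal.ofReal (‖x‖ ^ (s * p)) := by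
  have key : ∀ x : EuclideanSpace ℝ (Fin d),
      ‖(Ann d ε R).indicator (fun x => c * ‖x‖ ^ s) x‖ₑ ^ p
        = (Ann d ε R).indicator
            (fun x => ENNReal.ofReal (c ^ p) * ENNReal.ofReal (‖x‖ ^ (s * p))) x := by
    intro x
    by_cases hx : x ∈ Ann d ε R
    · rw [indicator_of_mem hx, indicator_of_mem hx]
      have h0 : 0 ≤ c * ‖x‖ ^ s := mul_nonneg hc (Real.rpow_nonneg (norm_nonneg x) s)
      rw [Real.enorm_eq_ofReal h0, ENNReal.ofReal_rpow_of_nonneg h0 hp.le,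
        Real.mul_rpow hc (Real.rpow_nonneg (norm_nonneg x) s),
        ← Real.rpow_mul (norm_nonneg x), ENNReal.ofReal_mul (Real.rpow_nonneg hc p)]
    · rw [indicator_of_notMem hx, indicator_of_notMem hx]
      simp [ENNReal.zero_rpow_of_pos hp]
  rw [lintegral_congr key, lintegral_indicator measurableSet_Ann,
    lintegral_const_mul _ (Measurable.ennreal_ofReal
      (show Measurable (fun y : EuclideanSpace ℝ (Fin d) => ‖y‖ ^ (s * p)) by fun_prop))]


lemma eLpNorm_indicator_rpow_le (hd : 1 ≤ d) {p : ℝ} (hp : 0 < p) {ε R c s : ℝ}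
    (hε : 0 < ε) (hεR : ε ≤ R) (hR : R ≤ 1) (hc : 0 ≤ c) (hs : s * p ≤ -(d:ℝ)) :
    (ENNReal.ofReal (c ^ p) * ENNReal.ofReal (sig d * Real.log (R / ε))) ^ (1/p)
      ≤ eLpNorm ((Ann d ε R).indicator (fun x => c * ‖x‖ ^ s)) (ENNReal.ofReal p) volume := by
  rw [eLpNorm_eq_lintegral_rpow_enorm_toReal (ENNReal.ofReal_pos.mpr hp).ne' ENNReal.ofReal_ne_top,
    ENNReal.toReal_ofReal hp.le, lintegral_rpow_indicator hp hc]
  exact ENNReal.rpow_le_rpow (mul_le_mul_right (lintegral_ann_ge hd hε hεR hR hs) _)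
    (by positivity)

lemma eLpNorm_indicator_rpow_eq (hd : 1 ≤ d) {p : ℝ} (hp : 0 < p) {ε R : ℝ}
    (hε : 0 < ε) (hεR : ε ≤ R) :
    eLpNorm ((Ann d ε R).indicator (fun y => ‖y‖ ^ (-(d:ℝ)/p))) (ENNReal.ofReal p) volume
      = ENNReal.ofReal (sig d * Real.log (R / ε)) ^ (1/p) := by
  have h1 : ((Ann d ε R).indicator (fun y : EuclideanSpace ℝ (Fin d) => ‖y‖ ^ (-(d:ℝ)/p)))
      = (Ann d ε R).indicator (fun y => 1 * ‖y‖ ^ (-(d:ℝ)/p)) := by simp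
  rw [h1, eLpNorm_eq_lintegral_rpow_enorm_toReal (ENNReal.ofReal_pos.mpr hp).ne' ENNReal.ofReal_ne_top,
    ENNReal.toReal_ofReal hp.le, lintegral_rpow_indicator hp zero_le_one,
    div_mul_cancel₀ _ hp.ne', lintegral_ann_eq hd hε hεR]
  simp


lemma volume_Ann12_pos (hd : 1 ≤ d) : 0 < volume (Ann d 1 2) := by
  set x0 : EuclideanSpace ℝ (Fin d) := (3/2 : ℝ) • EuclideanSpace.single (⟨0, hd⟩ : Fin d) (1:ℝ)
    with hx0def
  have hx0 : ‖x0‖ = 3/2 := by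
    rw [hx0def, norm_smul, EuclideanSpace.norm_single]
    norm_num
  have hsub : ball x0 (1/2) ⊆ Ann d 1 2 := by
    intro z hz
    rw [mem_ball, dist_eq_norm] at hz
    have h2 : |‖z‖ - ‖x0‖| ≤ ‖z - x0‖ := abs_norm_sub_norm_le z x0
    rw [hx0] at h2
    have h3 := abs_le.1 h2
    constructor
    · have := h3.2; linarith [h3.1]
    · linarith [h3.2]
  exact lt_of_lt_of_le (measure_ball_pos volume x0 (by norm_num)) (measure_mono hsub)

end NW

open NW in
/-- **Nirenberg–Walker, necessity**: if `a + b > 0` and the integral operator with kernel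
`k(x,y) = |x|^{-a} |x−y|^{-(d−(a+b))} |y|^{-b}` is bounded on `L^p(ℝ^d)` (on nonnegative
functions), then necessarily `a < d/p` and `b < d/q`, `q` the dual exponent of `p`. -/
theorem nirenberg_walker_necessity
    (d : ℕ) (hd : 1 ≤ d) (p q a b : ℝ) (hp : 1 < p) (hq : q = p / (p - 1))
    (hab : 0 < a + b) (M : ℝ) (hM : 0 < M)
    (hbound : ∀ φ : EuclideanSpace ℝ (Fin d) → ℝ, Measurable φ → (∀ x, 0 ≤ φ x) →
      MemLp φ (ENNReal.ofReal p) volume →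
      eLpNorm
        (fun x => ∫ y, φ y / (‖x‖ ^ a * ‖x - y‖ ^ ((d : ℝ) - (a + b)) * ‖y‖ ^ b))
        (ENNReal.ofReal p) volume
        ≤ ENNReal.ofReal M * eLpNorm φ (ENNReal.ofReal p) volume) :
    a < d / p ∧ b < d / q := by
  have hp0 : (0:ℝ) < p := lt_trans one_pos hp
  have hσ : 0 < sig d := sig_pos hd
  set t : ℝ := (d : ℝ) - (a + b) with ht
  have hC1pos : (0:ℝ) < max ((1/2:ℝ) ^ t) ((5/2:ℝ) ^ t) :=
    lt_of_lt_of_le (Real.rpow_pos_of_pos (by norm_num) t) (le_max_left _ _)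
  set C1 : ℝ := max ((1/2:ℝ) ^ t) ((5/2:ℝ) ^ t) with hC1
  have hεn : ∀ n : ℕ, 0 < (1/2) * Real.exp (-(n:ℝ)) ∧ (1/2) * Real.exp (-(n:ℝ)) ≤ 1/2 := by
    intro n
    constructor
    · positivity
    · nlinarith [Real.exp_le_one_iff.2 (neg_nonpos.2 (Nat.cast_nonneg n) : -(n:ℝ) ≤ 0),
        Real.exp_pos (-(n:ℝ))]
  have hlog : ∀ n : ℕ, Real.log ((1/2) / ((1/2) * Real.exp (-(n:ℝ)))) = n := by
    intro n
    have h1 : (1/2 : ℝ) / ((1/2) * Real.exp (-(n:ℝ))) = Real.exp (n:ℝ) := by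
      rw [Real.exp_neg]
      field_simp
    rw [h1, Real.log_exp]
  constructor
  · -- a < d / p
    by_contra hA
    push_neg at hA  -- d / p ≤ a
    have hdap : (d:ℝ) ≤ a * p := (div_le_iff₀ hp0).1 hA
    set φ : EuclideanSpace ℝ (Fin d) → ℝ := (Ann d 1 2).indicator (fun _ => (1:ℝ)) with hφ
    have hφm : Measurable φ := measurable_const.indicator measurableSet_Ann
    have hφ0 : ∀ x, 0 ≤ φ x := fun x => Set.indicator_nonneg (fun _ _ => zero_le_one) x
    have hφmem : MemLp φ (ENNReal.ofReal p) volume :=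
      memLp_indicator_const _ measurableSet_Ann 1 (Or.inr volume_Ann_ne_top)
    have hKle := hbound φ hφm hφ0 hφmem
    set RHS := ENNReal.ofReal M * eLpNorm φ (ENNReal.ofReal p) volume with hRHS
    have hRHStop : RHS ≠ ⊤ := ENNReal.mul_ne_top ENNReal.ofReal_ne_top hφmem.2.ne
    -- constants
    have hC2pos : (0:ℝ) < max ((1:ℝ) ^ b) ((2:ℝ) ^ b) :=
      lt_of_lt_of_le (Real.rpow_pos_of_pos one_pos b) (le_max_left _ _)
    set C2 : ℝ := max ((1:ℝ) ^ b) ((2:ℝ) ^ b) with hC2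
    have hVr : (0:ℝ) < (volume (Ann d 1 2)).toReal :=
      ENNReal.toReal_pos (volume_Ann12_pos hd).ne' volume_Ann_ne_top
    set Vr : ℝ := (volume (Ann d 1 2)).toReal with hVrdef
    set c0 : ℝ := Vr / (C1 * C2) with hc0def
    have hc0 : 0 < c0 := div_pos hVr (mul_pos hC1pos hC2pos)
    -- key pointwise estimate
    have key : ∀ x : EuclideanSpace ℝ (Fin d), 0 < ‖x‖ → ‖x‖ ≤ 1/2 →
        c0 * ‖x‖ ^ (-a) ≤ ∫ y, φ y / (‖x‖ ^ a * ‖x - y‖ ^ t * ‖y‖ ^ b) := by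
      intro x hx1 hx2
      have hstep1 : (fun y => φ y / (‖x‖ ^ a * ‖x - y‖ ^ t * ‖y‖ ^ b))
          = (Ann d 1 2).indicator (fun y => 1 / (‖x‖ ^ a * ‖x - y‖ ^ t * ‖y‖ ^ b)) := by
        funext y
        by_cases hy : y ∈ Ann d 1 2
        · rw [hφ, indicator_of_mem hy, indicator_of_mem hy]
        · rw [hφ, indicator_of_notMem hy, indicator_of_notMem hy, zero_div]
      rw [hstep1, integral_indicator measurableSet_Ann]
      -- bounds on the annulus
      have hbnd : ∀ y ∈ Ann d 1 2,
          1 / (‖x‖ ^ a * C1 * C2) ≤ 1 / (‖x‖ ^ a * ‖x - y‖ ^ t * ‖y‖ ^ b) ∧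
          1 / (‖x‖ ^ a * ‖x - y‖ ^ t * ‖y‖ ^ b)
            ≤ 1 / (‖x‖ ^ a * min ((1/2:ℝ) ^ t) ((5/2:ℝ) ^ t) * min ((1:ℝ) ^ b) ((2:ℝ) ^ b)) := by
        intro y hy
        have hy1 : 1 ≤ ‖y‖ := hy.1
        have hy2 : ‖y‖ ≤ 2 := hy.2
        have hxy1 : 1/2 ≤ ‖x - y‖ := by
          have h := norm_sub_norm_le y x
          rw [norm_sub_rev x y]
          linarith
        have hxy2 : ‖x - y‖ ≤ 5/2 := by
          have h := norm_sub_le x y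
          linarith
        have hxa : (0:ℝ) < ‖x‖ ^ a := Real.rpow_pos_of_pos hx1 a
        have hxyt : (0:ℝ) < ‖x - y‖ ^ t := Real.rpow_pos_of_pos (by linarith) t
        have hyb : (0:ℝ) < ‖y‖ ^ b := Real.rpow_pos_of_pos (by linarith) b
        have hub1 : ‖x - y‖ ^ t ≤ C1 := rpow_le_max (by norm_num) hxy1 hxy2
        have hub2 : ‖y‖ ^ b ≤ C2 := rpow_le_max one_pos hy1 hy2
        have hlb1 : min ((1/2:ℝ) ^ t) ((5/2:ℝ) ^ t) ≤ ‖x - y‖ ^ t :=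
          min_le_rpow (by norm_num) hxy1 hxy2
        have hlb2 : min ((1:ℝ) ^ b) ((2:ℝ) ^ b) ≤ ‖y‖ ^ b := min_le_rpow one_pos hy1 hy2
        have hm1pos : (0:ℝ) < min ((1/2:ℝ) ^ t) ((5/2:ℝ) ^ t) :=
          lt_min (Real.rpow_pos_of_pos (by norm_num) t) (Real.rpow_pos_of_pos (by norm_num) t)
        have hm2pos : (0:ℝ) < min ((1:ℝ) ^ b) ((2:ℝ) ^ b) :=
          lt_min (Real.rpow_pos_of_pos one_pos b) (Real.rpow_pos_of_pos (by norm_num) b)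
        constructor
        · refine one_div_le_one_div_of_le (by positivity) ?_
          calc ‖x‖ ^ a * ‖x - y‖ ^ t * ‖y‖ ^ b ≤ ‖x‖ ^ a * C1 * ‖y‖ ^ b := by
                apply mul_le_mul_of_nonneg_right _ hyb.le
                exact mul_le_mul_of_nonneg_left hub1 hxa.le
          _ ≤ ‖x‖ ^ a * C1 * C2 :=
                mul_le_mul_of_nonneg_left hub2 (by positivity)
        · refine one_div_le_one_div_of_le (by positivity) ?_
          calc ‖x‖ ^ a * min ((1/2:ℝ) ^ t) ((5/2:ℝ) ^ t) * min ((1:ℝ) ^ b) ((2:ℝ) ^ b)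
              ≤ ‖x‖ ^ a * ‖x - y‖ ^ t * min ((1:ℝ) ^ b) ((2:ℝ) ^ b) := by
                apply mul_le_mul_of_nonneg_right _ hm2pos.le
                exact mul_le_mul_of_nonneg_left hlb1 hxa.le
          _ ≤ ‖x‖ ^ a * ‖x - y‖ ^ t * ‖y‖ ^ b :=
                mul_le_mul_of_nonneg_left hlb2 (by positivity)
      -- integrability
      have hint : IntegrableOn (fun y => 1 / (‖x‖ ^ a * ‖x - y‖ ^ t * ‖y‖ ^ b))
          (Ann d 1 2) volume := by
        refine integrableOn_ann_of_bounded (f := fun y => 1 / (‖x‖ ^ a * ‖x - y‖ ^ t * ‖y‖ ^ b))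
          (C := 1 / (‖x‖ ^ a * min ((1/2:ℝ) ^ t) ((5/2:ℝ) ^ t) * min ((1:ℝ) ^ b) ((2:ℝ) ^ b)))
          (show Measurable (fun y : EuclideanSpace ℝ (Fin d) => 1 / (‖x‖ ^ a * ‖x - y‖ ^ t * ‖y‖ ^ b)) by fun_prop).aestronglyMeasurable ?_
        intro y hy
        have h1 := (hbnd y hy).2
        have hy1 : (1:ℝ) ≤ ‖y‖ := hy.1
        have hxy1 : 1/2 ≤ ‖x - y‖ := by
          have h := norm_sub_norm_le y x
          rw [norm_sub_rev x y]
          linarith [hy.1]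
        have hpos : (0:ℝ) < ‖x‖ ^ a * ‖x - y‖ ^ t * ‖y‖ ^ b := by
          have hxa : (0:ℝ) < ‖x‖ ^ a := Real.rpow_pos_of_pos hx1 a
          have hxyt : (0:ℝ) < ‖x - y‖ ^ t := Real.rpow_pos_of_pos (by linarith) t
          have hyb : (0:ℝ) < ‖y‖ ^ b := Real.rpow_pos_of_pos (by linarith) b
          positivity
        rw [abs_of_nonneg (by positivity)]
        exact h1
      -- compare with constant
      have hconst : ∫ y in Ann d 1 2, (1 / (‖x‖ ^ a * C1 * C2))
          ≤ ∫ y in Ann d 1 2, 1 / (‖x‖ ^ a * ‖x - y‖ ^ t * ‖y‖ ^ b) := by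
        refine setIntegral_mono_on (integrableOn_const ?_) hint measurableSet_Ann
          (fun y hy => (hbnd y hy).1)
        exact volume_Ann_ne_top
      rw [setIntegral_const, smul_eq_mul] at hconst
      refine le_trans (le_of_eq ?_) hconst
      rw [Real.rpow_neg (norm_nonneg x), hc0def]
      have hxa : (0:ℝ) < ‖x‖ ^ a := Real.rpow_pos_of_pos hx1 a
      field_simp
      rfl
    -- lower bound on the norm for each n, contradiction
    have keyn : ∀ n : ℕ, (ENNReal.ofReal (c0 ^ p) * ENNReal.ofReal (sig d * n)) ^ (1/p)
        ≤ RHS := by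
      intro n
      obtain ⟨hε0, hε12⟩ := hεn n
      refine le_trans ?_ hKle
      have h1 := eLpNorm_indicator_rpow_le (d := d) hd hp0 (c := c0) (s := -a)
        hε0 hε12 (by norm_num) hc0.le (by nlinarith)
      rw [hlog n] at h1
      refine le_trans h1 (eLpNorm_mono fun x => ?_)
      by_cases hx : x ∈ Ann d (1/2 * Real.exp (-(n:ℝ))) (1/2)
      · rw [indicator_of_mem hx]
        have hx1 : 0 < ‖x‖ := lt_of_lt_of_le hε0 hx.1
        have hk := key x hx1 hx.2
        rw [Real.norm_eq_abs, Real.norm_eq_abs,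
          abs_of_nonneg (mul_nonneg hc0.le (Real.rpow_nonneg (norm_nonneg x) _)),
          abs_of_nonneg (le_trans (mul_nonneg hc0.le
            (Real.rpow_nonneg (norm_nonneg x) _)) hk)]
        exact hk
      · rw [indicator_of_notMem hx]
        simp [abs_nonneg]
    -- derive numeric contradiction
    have keyn2 : ∀ n : ℕ, c0 ^ p * (sig d * n) ≤ ((RHS) ^ p).toReal := by
      intro n
      have h1 := keyn n
      have h2 : (ENNReal.ofReal (c0 ^ p) * ENNReal.ofReal (sig d * n)) ≤ RHS ^ p := by
        have h3 := ENNReal.rpow_le_rpow h1 hp0.le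
        rwa [← ENNReal.rpow_mul, one_div_mul_cancel hp0.ne', ENNReal.rpow_one] at h3
      have h4 : ((ENNReal.ofReal (c0 ^ p) * ENNReal.ofReal (sig d * n))).toReal
          = c0 ^ p * (sig d * n) := by
        rw [ENNReal.toReal_mul, ENNReal.toReal_ofReal (by positivity),
          ENNReal.toReal_ofReal (by positivity)]
      rw [← h4]
      exact ENNReal.toReal_mono (ENNReal.rpow_ne_top_of_nonneg hp0.le hRHStop) h2
    obtain ⟨n, hn⟩ := exists_nat_gt (((RHS) ^ p).toReal / (c0 ^ p * sig d))
    have h5 := keyn2 n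
    rw [div_lt_iff₀ (by positivity)] at hn
    nlinarith
  · -- b < d / q
    by_contra hB
    push_neg at hB  -- d / q ≤ b
    have hp1 : (0:ℝ) < p - 1 := by linarith
    have hdq : (d:ℝ) / q = d - d / p := by
      rw [hq]; field_simp
    have hdpb : (d:ℝ) ≤ d / p + b := by
      rw [hdq] at hB; linarith
    have hCApos : (0:ℝ) < max ((1:ℝ) ^ a) ((2:ℝ) ^ a) :=
      lt_of_lt_of_le (Real.rpow_pos_of_pos one_pos a) (le_max_left _ _)
    set CA : ℝ := max ((1:ℝ) ^ a) ((2:ℝ) ^ a) with hCA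
    set c1 : ℝ := CA * C1 with hc1def
    have hc1 : 0 < c1 := mul_pos hCApos hC1pos
    have hVpos : 0 < volume (Ann d 1 2) := volume_Ann12_pos hd
    have hVtop : volume (Ann d 1 2) ≠ ⊤ := volume_Ann_ne_top
    have hVp : 0 < ((volume (Ann d 1 2)) ^ (1/p)).toReal := by
      refine ENNReal.toReal_pos ?_ ?_
      · simp only [ne_eq, ENNReal.rpow_eq_zero_iff, not_or]
        constructor
        · rintro ⟨h1, -⟩; exact hVpos.ne' h1
        · rintro ⟨h1, -⟩; exact hVtop h1
      · exact (ENNReal.rpow_lt_top_of_nonneg (by positivity) hVtop).ne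
    set Vp : ℝ := ((volume (Ann d 1 2)) ^ (1/p)).toReal with hVpdef
    have keyn : ∀ n : ℕ, sig d * (n:ℝ) / c1 * Vp ≤ M * (sig d * n) ^ (1/p) := by
      intro n
      obtain ⟨hε0, hε12⟩ := hεn n
      set ε : ℝ := 1/2 * Real.exp (-(n:ℝ)) with hεdef
      set φn : EuclideanSpace ℝ (Fin d) → ℝ :=
        (Ann d ε (1/2)).indicator (fun y => ‖y‖ ^ (-(d:ℝ)/p)) with hφn
      have hφm : Measurable φn :=
        (show Measurable (fun y : EuclideanSpace ℝ (Fin d) => ‖y‖ ^ (-(d:ℝ)/p)) by fun_prop).indicator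
          measurableSet_Ann
      have hφ0 : ∀ x, 0 ≤ φn x :=
        fun x => Set.indicator_nonneg (fun y _ => Real.rpow_nonneg (norm_nonneg y) _) x
      have hφnorm : eLpNorm φn (ENNReal.ofReal p) volume
          = ENNReal.ofReal (sig d * n) ^ (1/p) := by
        rw [hφn, eLpNorm_indicator_rpow_eq hd hp0 hε0 hε12, hlog n]
      have hφmem : MemLp φn (ENNReal.ofReal p) volume :=
        ⟨hφm.aestronglyMeasurable, by
          rw [hφnorm]
          exact ENNReal.rpow_lt_top_of_nonneg (by positivity) ENNReal.ofReal_ne_top⟩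
      have hKle := hbound φn hφm hφ0 hφmem
      set κ : ℝ := sig d * (n:ℝ) / c1 with hκdef
      have hκ0 : 0 ≤ κ := by positivity
      -- pointwise lower bound
      have key : ∀ x ∈ Ann d 1 2,
          κ ≤ ∫ y, φn y / (‖x‖ ^ a * ‖x - y‖ ^ t * ‖y‖ ^ b) := by
        intro x hx
        have hx1 : 1 ≤ ‖x‖ := hx.1
        have hx2 : ‖x‖ ≤ 2 := hx.2
        have hstep1 : (fun y => φn y / (‖x‖ ^ a * ‖x - y‖ ^ t * ‖y‖ ^ b))
            = (Ann d ε (1/2)).indicator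
                (fun y => ‖y‖ ^ (-(d:ℝ)/p) / (‖x‖ ^ a * ‖x - y‖ ^ t * ‖y‖ ^ b)) := by
          funext y
          by_cases hy : y ∈ Ann d ε (1/2)
          · rw [hφn, indicator_of_mem hy, indicator_of_mem hy]
          · rw [hφn, indicator_of_notMem hy, indicator_of_notMem hy, zero_div]
        rw [hstep1, integral_indicator measurableSet_Ann]
        have hbnd : ∀ y ∈ Ann d ε (1/2),
            ‖y‖ ^ (-(d:ℝ)) / c1
              ≤ ‖y‖ ^ (-(d:ℝ)/p) / (‖x‖ ^ a * ‖x - y‖ ^ t * ‖y‖ ^ b) := by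
          intro y hy
          have hy0 : 0 < ‖y‖ := lt_of_lt_of_le hε0 hy.1
          have hy2 : ‖y‖ ≤ 1/2 := hy.2
          have hxy1 : 1/2 ≤ ‖x - y‖ := by
            have h := norm_sub_norm_le x y
            linarith
          have hxy2 : ‖x - y‖ ≤ 5/2 := by
            have h := norm_sub_le x y
            linarith
          have hxa : (0:ℝ) < ‖x‖ ^ a := Real.rpow_pos_of_pos (by linarith) a
          have hxyt : (0:ℝ) < ‖x - y‖ ^ t := Real.rpow_pos_of_pos (by linarith) t
          have hyb : (0:ℝ) < ‖y‖ ^ b := Real.rpow_pos_of_pos hy0 b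
          have hub1 : ‖x‖ ^ a ≤ CA := rpow_le_max one_pos hx1 hx2
          have hub2 : ‖x - y‖ ^ t ≤ C1 := rpow_le_max (by norm_num) hxy1 hxy2
          have hD : ‖x‖ ^ a * ‖x - y‖ ^ t * ‖y‖ ^ b ≤ c1 * ‖y‖ ^ b := by
            rw [hc1def]
            apply mul_le_mul_of_nonneg_right _ hyb.le
            exact mul_le_mul hub1 hub2 hxyt.le hCApos.le
          have h2 : ‖y‖ ^ (-(d:ℝ)/p - b) / c1 = ‖y‖ ^ (-(d:ℝ)/p) / (c1 * ‖y‖ ^ b) := by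
            rw [Real.rpow_sub hy0, div_div, mul_comm]
          have h3 : ‖y‖ ^ (-(d:ℝ)) ≤ ‖y‖ ^ (-(d:ℝ)/p - b) :=
            Real.rpow_le_rpow_of_exponent_ge hy0 (by linarith) (by rw [neg_div]; linarith)
          have hDpos : (0:ℝ) < ‖x‖ ^ a * ‖x - y‖ ^ t * ‖y‖ ^ b := by positivity
          calc ‖y‖ ^ (-(d:ℝ)) / c1 ≤ ‖y‖ ^ (-(d:ℝ)/p - b) / c1 :=
                (div_le_div_iff_of_pos_right hc1).2 h3
          _ = ‖y‖ ^ (-(d:ℝ)/p) / (c1 * ‖y‖ ^ b) := h2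
          _ ≤ ‖y‖ ^ (-(d:ℝ)/p) / (‖x‖ ^ a * ‖x - y‖ ^ t * ‖y‖ ^ b) :=
                (div_le_div_iff_of_pos_left (Real.rpow_pos_of_pos hy0 _) (by positivity) hDpos).2 hD
        -- integrability of the integrand
        have hint : IntegrableOn
            (fun y => ‖y‖ ^ (-(d:ℝ)/p) / (‖x‖ ^ a * ‖x - y‖ ^ t * ‖y‖ ^ b))
            (Ann d ε (1/2)) volume := by
          refine integrableOn_ann_of_bounded
            (C := max (ε ^ (-(d:ℝ)/p)) ((1/2:ℝ) ^ (-(d:ℝ)/p)) /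
              (min ((1:ℝ) ^ a) ((2:ℝ) ^ a) * min ((1/2:ℝ) ^ t) ((5/2:ℝ) ^ t)
                * min (ε ^ b) ((1/2:ℝ) ^ b)))
            (show Measurable (fun y : EuclideanSpace ℝ (Fin d) =>
              ‖y‖ ^ (-(d:ℝ)/p) / (‖x‖ ^ a * ‖x - y‖ ^ t * ‖y‖ ^ b)) by fun_prop).aestronglyMeasurable ?_
          intro y hy
          have hy0 : 0 < ‖y‖ := lt_of_lt_of_le hε0 hy.1
          have hy2 : ‖y‖ ≤ 1/2 := hy.2
          have hxy1 : 1/2 ≤ ‖x - y‖ := by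
            have h := norm_sub_norm_le x y
            linarith
          have hxy2 : ‖x - y‖ ≤ 5/2 := by
            have h := norm_sub_le x y
            linarith
          have hxa : (0:ℝ) < ‖x‖ ^ a := Real.rpow_pos_of_pos (by linarith) a
          have hxyt : (0:ℝ) < ‖x - y‖ ^ t := Real.rpow_pos_of_pos (by linarith) t
          have hyb : (0:ℝ) < ‖y‖ ^ b := Real.rpow_pos_of_pos hy0 b
          have hnum : ‖y‖ ^ (-(d:ℝ)/p) ≤ max (ε ^ (-(d:ℝ)/p)) ((1/2:ℝ) ^ (-(d:ℝ)/p)) :=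
            rpow_le_max hε0 hy.1 hy.2
          have hd1 : min ((1:ℝ) ^ a) ((2:ℝ) ^ a) ≤ ‖x‖ ^ a := min_le_rpow one_pos hx1 hx2
          have hd2 : min ((1/2:ℝ) ^ t) ((5/2:ℝ) ^ t) ≤ ‖x - y‖ ^ t :=
            min_le_rpow (by norm_num) hxy1 hxy2
          have hd3 : min (ε ^ b) ((1/2:ℝ) ^ b) ≤ ‖y‖ ^ b := min_le_rpow hε0 hy.1 hy.2
          have hm1 : (0:ℝ) < min ((1:ℝ) ^ a) ((2:ℝ) ^ a) :=
            lt_min (Real.rpow_pos_of_pos one_pos a) (Real.rpow_pos_of_pos (by norm_num) a)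
          have hm2 : (0:ℝ) < min ((1/2:ℝ) ^ t) ((5/2:ℝ) ^ t) :=
            lt_min (Real.rpow_pos_of_pos (by norm_num) t) (Real.rpow_pos_of_pos (by norm_num) t)
          have hm3 : (0:ℝ) < min (ε ^ b) ((1/2:ℝ) ^ b) :=
            lt_min (Real.rpow_pos_of_pos hε0 b) (Real.rpow_pos_of_pos (by norm_num) b)
          rw [abs_of_nonneg (by positivity)]
          apply div_le_div₀ (by positivity) hnum (by positivity)
          calc min ((1:ℝ) ^ a) ((2:ℝ) ^ a) * min ((1/2:ℝ) ^ t) ((5/2:ℝ) ^ t)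
                * min (ε ^ b) ((1/2:ℝ) ^ b)
              ≤ ‖x‖ ^ a * ‖x - y‖ ^ t * min (ε ^ b) ((1/2:ℝ) ^ b) := by
                apply mul_le_mul_of_nonneg_right _ hm3.le
                exact mul_le_mul hd1 hd2 hm2.le hxa.le
          _ ≤ ‖x‖ ^ a * ‖x - y‖ ^ t * ‖y‖ ^ b :=
                mul_le_mul_of_nonneg_left hd3 (by positivity)
        -- comparison
        have hlow : IntegrableOn (fun y : EuclideanSpace ℝ (Fin d) => ‖y‖ ^ (-(d:ℝ)) / c1)
            (Ann d ε (1/2)) volume := (integrableOn_ann_rpow hε0 _).div_const c1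
        have hcomp := setIntegral_mono_on hlow hint measurableSet_Ann hbnd
        refine le_trans (le_of_eq ?_) hcomp
        rw [integral_div, integral_ann hd hε0 hε12, hlog n, hκdef]
      -- from the pointwise bound to the norm bound
      have hK0 : ∀ x : EuclideanSpace ℝ (Fin d),
          0 ≤ ∫ y, φn y / (‖x‖ ^ a * ‖x - y‖ ^ t * ‖y‖ ^ b) := by
        intro x
        refine integral_nonneg fun y => ?_
        refine div_nonneg (hφ0 y) ?_
        have h1 : (0:ℝ) ≤ ‖x‖ ^ a := Real.rpow_nonneg (norm_nonneg x) a
        have h2 : (0:ℝ) ≤ ‖x - y‖ ^ t := Real.rpow_nonneg (norm_nonneg _) t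
        have h3 : (0:ℝ) ≤ ‖y‖ ^ b := Real.rpow_nonneg (norm_nonneg y) b
        positivity
      have hmono : eLpNorm ((Ann d 1 2).indicator (fun _ => κ)) (ENNReal.ofReal p) volume
          ≤ eLpNorm (fun x => ∫ y, φn y / (‖x‖ ^ a * ‖x - y‖ ^ t * ‖y‖ ^ b))
              (ENNReal.ofReal p) volume := by
        refine eLpNorm_mono fun x => ?_
        by_cases hx : x ∈ Ann d 1 2
        · rw [indicator_of_mem hx, Real.norm_eq_abs, Real.norm_eq_abs,
            abs_of_nonneg hκ0, abs_of_nonneg (hK0 x)]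
          exact key x hx
        · rw [indicator_of_notMem hx]
          simp [abs_nonneg]
      have hconstnorm : eLpNorm ((Ann d 1 2).indicator (fun _ => κ)) (ENNReal.ofReal p) volume
          = (‖κ‖₊ : ℝ≥0∞) * (volume (Ann d 1 2)) ^ (1/p) := by
        rw [eLpNorm_indicator_const measurableSet_Ann (ENNReal.ofReal_pos.mpr hp0).ne'
          ENNReal.ofReal_ne_top, ENNReal.toReal_ofReal hp0.le]
        rfl
      have hchain : (‖κ‖₊ : ℝ≥0∞) * (volume (Ann d 1 2)) ^ (1/p)
          ≤ ENNReal.ofReal M * ENNReal.ofReal (sig d * n) ^ (1/p) := by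
        rw [← hconstnorm]
        refine le_trans hmono (le_trans hKle ?_)
        rw [hφnorm]
      have hR2top : ENNReal.ofReal M * ENNReal.ofReal (sig d * n) ^ (1/p) ≠ ⊤ :=
        ENNReal.mul_ne_top ENNReal.ofReal_ne_top
          (ENNReal.rpow_lt_top_of_nonneg (by positivity) ENNReal.ofReal_ne_top).ne
      have htr := ENNReal.toReal_mono hR2top hchain
      rw [ENNReal.toReal_mul, ENNReal.toReal_mul, ENNReal.coe_toReal, coe_nnnorm,
        Real.norm_eq_abs, abs_of_nonneg hκ0, ENNReal.toReal_ofReal hM.le,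
        ENNReal.ofReal_rpow_of_nonneg (by positivity) (by positivity),
        ENNReal.toReal_ofReal (Real.rpow_nonneg (by positivity) _)] at htr
      exact htr
    -- final arithmetic contradiction
    have he : (0:ℝ) < 1 - 1/p := by
      have : 1/p < 1 := (div_lt_one hp0).2 hp
      linarith
    set e : ℝ := 1 - 1/p with hedef
    have harith : ∀ m : ℕ, (sig d * ((m:ℝ)+1)) ^ e ≤ M * c1 / Vp := by
      intro m
      have h := keyn (m+1)
      push_cast at h
      set S : ℝ := sig d * ((m:ℝ)+1) with hSdef
      have hS : 0 < S := by positivity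
      have hu : 0 < S ^ (1/p) := Real.rpow_pos_of_pos hS _
      have hv : 0 < S ^ e := Real.rpow_pos_of_pos hS _
      have hSsplit : S = S ^ (1/p) * S ^ e := by
        rw [← Real.rpow_add hS, hedef]
        norm_num
      have h1 : S * Vp ≤ M * S ^ (1/p) * c1 := by
        have h2 := mul_le_mul_of_nonneg_right h hc1.le
        calc S * Vp = S / c1 * Vp * c1 := by
              rw [div_mul_eq_mul_div, div_mul_cancel₀ _ hc1.ne']
        _ ≤ M * S ^ (1/p) * c1 := h2
      have h3 : S ^ (1/p) * (S ^ e * Vp) ≤ S ^ (1/p) * (M * c1) := by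
        calc S ^ (1/p) * (S ^ e * Vp) = S * Vp := by
              conv_rhs => rw [hSsplit]
              rw [mul_assoc]
        _ ≤ M * S ^ (1/p) * c1 := h1
        _ = S ^ (1/p) * (M * c1) := by ring
      have h4 : S ^ e * Vp ≤ M * c1 := (mul_le_mul_iff_right₀ hu).1 h3
      exact (le_div_iff₀ hVp).2 h4
    obtain ⟨m, hm⟩ := exists_nat_gt ((max (M * c1 / Vp) 1) ^ (1/e) / sig d)
    have h := harith m
    have hBd : (sig d * ((m:ℝ)+1)) ^ e ≤ max (M * c1 / Vp) 1 :=
      le_trans h (le_max_left _ _)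
    have hS : (0:ℝ) < sig d * ((m:ℝ)+1) := by positivity
    have hmax1 : (0:ℝ) < max (M * c1 / Vp) 1 := lt_of_lt_of_le one_pos (le_max_right _ _)
    have h5 : sig d * ((m:ℝ)+1) ≤ (max (M * c1 / Vp) 1) ^ (1/e) := by
      have h6 : ((sig d * ((m:ℝ)+1)) ^ e) ^ (1/e) ≤ (max (M * c1 / Vp) 1) ^ (1/e) :=
        Real.rpow_le_rpow (Real.rpow_nonneg hS.le _) hBd (by positivity)
      rwa [← Real.rpow_mul hS.le, mul_one_div_cancel he.ne', Real.rpow_one] at h6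
    rw [div_lt_iff₀ hσ] at hm
    nlinarith
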